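/- Let γ < 1 and let v : [0,1] → ℝ be locally absolutely continuous on (0,1], continuous at 0 with v(0) = 0, and suppose ∫₀¹ x^γ (v'(x))² dx < ∞. Then ∫₀¹ x^{γ−2} v(x)² dx ≤ (4/(1−γ)²) ∫₀¹ x^γ (v'(x))² dx. -/

import Mathlib

open MeasureTheory Set intervalIntegral
open scoped ENNReal NNReal

private lemma lint_rpow_Ioc {r x : ℝ} (hr : -1 < r) (hx : 0 < x) :
    ∫⁻ y in Ioc (0:ℝ) x, ENNReal.ofReal (y ^ r) = ENNReal.ofReal (x ^ (r+1) / (r+1)) := by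
  rw [← ofReal_integral_eq_lintegral_ofReal]
  · congr 1
    rw [← integral_of_le hx.le, integral_rpow (Or.inl hr),
      Real.zero_rpow (by linarith)]
    ring
  · exact (intervalIntegrable_rpow' hr).1
  · filter_upwards [ae_restrict_mem measurableSet_Ioc] with y hy
    exact Real.rpow_nonneg hy.1.le r

private lemma hardy_cs (β : ℝ) (hβ : β < 1) (w : ℝ → ℝ) (hw : Measurable w)
    {x : ℝ} (hx : 0 < x) :
    ENNReal.ofReal ((∫ y in Ioc (0:ℝ) x, w y) ^ 2) ≤
      (∫⁻ y in Ioc (0:ℝ) x, ENNReal.ofReal (y ^ β * w y ^ 2)) *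
        ENNReal.ofReal (x ^ (1 - β) / (1 - β)) := by
  set μ := volume.restrict (Ioc (0:ℝ) x) with hμ
  set f : ℝ → ℝ≥0∞ := fun y => ENNReal.ofReal (y ^ (β/2) * |w y|) with hf
  set h : ℝ → ℝ≥0∞ := fun y => ENNReal.ofReal (y ^ (-(β/2))) with hh
  have hfm : AEMeasurable f μ := by
    apply Measurable.aemeasurable
    have : Measurable fun y : ℝ => y ^ (β/2) := by measurability
    exact (this.mul hw.abs).ennreal_ofReal
  have hhm : AEMeasurable h μ := by
    have : Measurable fun y : ℝ => y ^ (-(β/2)) := by measurability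
    exact this.ennreal_ofReal.aemeasurable
  set I := ∫ y in Ioc (0:ℝ) x, w y with hI
  have step1 : ENNReal.ofReal |I| ≤ ∫⁻ y, (f * h) y ∂μ := by
    calc ENNReal.ofReal |I| = ‖I‖ₑ := (Real.enorm_eq_ofReal_abs I).symm
      _ ≤ ∫⁻ y, ‖w y‖ₑ ∂μ := enorm_integral_le_lintegral_enorm _
      _ = ∫⁻ y, (f * h) y ∂μ := by
          refine setLIntegral_congr_fun measurableSet_Ioc (fun y hy => ?_)
          simp only [Pi.mul_apply, hf, hh]
          rw [← ENNReal.ofReal_mul (mul_nonneg (Real.rpow_nonneg hy.1.le _) (abs_nonneg _)), Real.enorm_eq_ofReal_abs]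
          congr 1
          rw [mul_comm (y ^ (β/2)) |w y|, mul_assoc, ← Real.rpow_add hy.1]
          simp
  have hsq : ∀ a : ℝ≥0∞, a ^ (2:ℝ) = a * a := by
    intro a
    rw [show (2:ℝ) = ((2:ℕ):ℝ) by norm_num, ENNReal.rpow_natCast, sq]
  have hf2 : ∫⁻ y, f y ^ (2:ℝ) ∂μ = ∫⁻ y in Ioc (0:ℝ) x, ENNReal.ofReal (y ^ β * w y ^ 2) := by
    refine setLIntegral_congr_fun measurableSet_Ioc (fun y hy => ?_)
    rw [hsq, hf, ← ENNReal.ofReal_mul (mul_nonneg (Real.rpow_nonneg hy.1.le _) (abs_nonneg _))]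
    congr 1
    rw [show y ^ (β/2) * |w y| * (y ^ (β/2) * |w y|) = (y ^ (β/2) * y ^ (β/2)) * (|w y| * |w y|) by ring,
      ← Real.rpow_add hy.1, abs_mul_abs_self, ← sq]
    norm_num
  have hh2 : ∫⁻ y, h y ^ (2:ℝ) ∂μ = ENNReal.ofReal (x ^ (1-β) / (1-β)) := by
    have : ∫⁻ y, h y ^ (2:ℝ) ∂μ = ∫⁻ y in Ioc (0:ℝ) x, ENNReal.ofReal (y ^ (-β)) := by
      refine setLIntegral_congr_fun measurableSet_Ioc (fun y hy => ?_)
      rw [hsq, hh, ← ENNReal.ofReal_mul (Real.rpow_nonneg hy.1.le _), ← Real.rpow_add hy.1,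
        show -(β/2) + -(β/2) = -β by ring]
    rw [this, lint_rpow_Ioc (by linarith) hx, show -β + 1 = 1 - β by ring]
  have holder := ENNReal.lintegral_mul_le_Lp_mul_Lq μ
    Real.HolderConjugate.two_two hfm hhm
  rw [hf2, hh2] at holder
  have step2 : ENNReal.ofReal (I ^ 2) = (ENNReal.ofReal |I|) ^ 2 := by
    rw [← sq_abs, ENNReal.ofReal_pow (abs_nonneg _)]
  rw [step2]
  calc (ENNReal.ofReal |I|) ^ 2 ≤ (∫⁻ y, (f * h) y ∂μ) ^ 2 :=
        pow_le_pow_left₀ zero_le step1 2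
    _ ≤ ((∫⁻ y in Ioc (0:ℝ) x, ENNReal.ofReal (y ^ β * w y ^ 2)) ^ (1/2:ℝ) *
          ENNReal.ofReal (x ^ (1-β) / (1-β)) ^ (1/2:ℝ)) ^ 2 :=
        pow_le_pow_left₀ zero_le holder 2
    _ = _ := by
        rw [mul_pow, ← ENNReal.rpow_natCast (_ ^ (1/2:ℝ)) 2, ← ENNReal.rpow_natCast (ENNReal.ofReal _ ^ (1/2:ℝ)) 2,
          ← ENNReal.rpow_mul, ← ENNReal.rpow_mul]
        norm_num
        rfl

private lemma hardy_real_ineq {d a : ℝ} (hd : 0 < d) (ha : 0 ≤ a) :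
    (1 - a)/(-d) * (1/d) ≤ 4/(4*d^2) * a := by
  have hne : d ≠ 0 := ne_of_gt hd
  have h1 : (1 - a)/(-d) * (1/d) = (a-1)/d^2 := by
    field_simp
    ring
  have h2 : (4:ℝ)/(4*d^2) * a = a/d^2 := by
    field_simp
  rw [h1, h2]
  gcongr
  linarith

private lemma lint_rpow_Ioc' {r y : ℝ} (hr : r ≠ -1) (hy : 0 < y) (hy1 : y ≤ 1) :
    ∫⁻ x in Ioc y 1, ENNReal.ofReal (x ^ r) = ENNReal.ofReal ((1 - y ^ (r+1)) / (r+1)) := by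
  have h0 : (0:ℝ) ∉ Set.uIcc y 1 := by
    rw [Set.uIcc_of_le hy1]
    exact fun h => absurd h.1 (by linarith)
  rw [← ofReal_integral_eq_lintegral_ofReal]
  · congr 1
    rw [← integral_of_le hy1, integral_rpow (Or.inr ⟨hr, h0⟩), Real.one_rpow]
  · exact (intervalIntegrable_rpow (Or.inr h0)).1
  · filter_upwards [ae_restrict_mem measurableSet_Ioc] with z hz
    exact Real.rpow_nonneg (by linarith [hz.1]) r

set_option maxHeartbeats 1000000 in
/-- Hardy–Poincaré inequality with weight `x^γ` for all exponents `γ < 1`. -/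
theorem hardy_poincare_gamma_lt_one (γ : ℝ) (hγ : γ < 1) (v : ℝ → ℝ)
    (hv0 : v 0 = 0) (hvcont : ContinuousAt v 0)
    (hAC : ∀ x ∈ Ioc (0:ℝ) 1, v x = ∫ y in (0:ℝ)..x, deriv v y)
    (hfin : ∫⁻ x in Ioc (0:ℝ) 1, ENNReal.ofReal (x ^ γ * (deriv v x) ^ 2) < ⊤) :
    ∫⁻ x in Ioc (0:ℝ) 1, ENNReal.ofReal (x ^ (γ - 2) * (v x) ^ 2) ≤
      ENNReal.ofReal (4 / (1 - γ) ^ 2) *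
        ∫⁻ x in Ioc (0:ℝ) 1, ENNReal.ofReal (x ^ γ * (deriv v x) ^ 2) := by
  set β := (1+γ)/2 with hβdef
  have hβ1 : β < 1 := by rw [hβdef]; linarith
  have h1β : 0 < 1 - β := by linarith
  have hγβ : 0 < β - γ := by rw [hβdef]; linarith
  set d := (1-γ)/2 with hddef
  have hd : 0 < d := by rw [hddef]; linarith
  have hwm : Measurable (deriv v) := measurable_deriv v
  set g : ℝ → ℝ≥0∞ := fun y => ENNReal.ofReal (y ^ β * (deriv v y)^2) with hgdef
  have hgm : Measurable g := by
    have h1 : Measurable fun y : ℝ => y ^ β := by measurability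
    exact (h1.mul (hwm.pow_const 2)).ennreal_ofReal
  set c : ℝ → ℝ≥0∞ := fun x => ENNReal.ofReal (x ^ (γ - 1 - β) / (1-β)) with hcdef
  have hcm : Measurable c := by
    have h1 : Measurable fun x : ℝ => x ^ (γ-1-β) := by measurability
    exact (h1.div_const _).ennreal_ofReal
  set K : ℝ → ℝ → ℝ≥0∞ := fun x y => if y ≤ x then c x * g y else 0 with hKdef
  have hKm : AEMeasurable (fun p : ℝ × ℝ => K p.1 p.2)
      ((volume.restrict (Ioc (0:ℝ) 1)).prod (volume.restrict (Ioc (0:ℝ) 1))) := by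
    apply Measurable.aemeasurable
    have hset : MeasurableSet {p : ℝ × ℝ | p.2 ≤ p.1} :=
      measurableSet_le measurable_snd measurable_fst
    exact Measurable.ite hset ((hcm.comp measurable_fst).mul (hgm.comp measurable_snd))
      measurable_const
  have key : ∀ x ∈ Ioc (0:ℝ) 1,
      ENNReal.ofReal (x ^ (γ-2) * v x ^ 2) ≤ c x * ∫⁻ y in Ioc (0:ℝ) x, g y := by
    intro x hx
    have hvx : v x = ∫ y in Ioc (0:ℝ) x, deriv v y := by
      rw [hAC x hx, integral_of_le hx.1.le]
    have hCS := hardy_cs β hβ1 (deriv v) hwm hx.1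
    rw [← hvx] at hCS
    calc ENNReal.ofReal (x ^ (γ-2) * v x ^ 2)
        = ENNReal.ofReal (x ^ (γ-2)) * ENNReal.ofReal (v x ^ 2) :=
          ENNReal.ofReal_mul (Real.rpow_nonneg hx.1.le _)
      _ ≤ ENNReal.ofReal (x ^ (γ-2)) *
          ((∫⁻ y in Ioc (0:ℝ) x, g y) * ENNReal.ofReal (x ^ (1-β) / (1-β))) :=
          mul_le_mul_right hCS _
      _ = (ENNReal.ofReal (x ^ (γ-2)) * ENNReal.ofReal (x ^ (1-β) / (1-β))) *
            ∫⁻ y in Ioc (0:ℝ) x, g y := by ring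
      _ = c x * ∫⁻ y in Ioc (0:ℝ) x, g y := by
          congr 1
          rw [← ENNReal.ofReal_mul (Real.rpow_nonneg hx.1.le _), hcdef]
          congr 1
          rw [mul_div_assoc', ← Real.rpow_add hx.1, show γ - 2 + (1-β) = γ - 1 - β by ring]
  calc ∫⁻ x in Ioc (0:ℝ) 1, ENNReal.ofReal (x ^ (γ-2) * v x ^ 2)
      ≤ ∫⁻ x in Ioc (0:ℝ) 1, c x * ∫⁻ y in Ioc (0:ℝ) x, g y :=
        setLIntegral_mono' measurableSet_Ioc key
    _ = ∫⁻ x in Ioc (0:ℝ) 1, ∫⁻ y in Ioc (0:ℝ) 1, K x y := by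
        refine setLIntegral_congr_fun measurableSet_Ioc (fun x hx => ?_)
        have e1 : ∀ y, K x y = (Iic x).indicator (fun y => c x * g y) y := fun y => by
          simp [hKdef, Set.indicator_apply, mem_Iic]
        have e2 : Iic x ∩ Ioc (0:ℝ) 1 = Ioc 0 x := by
          ext z
          simp only [mem_inter_iff, mem_Iic, mem_Ioc]
          constructor
          · rintro ⟨h1, h2, h3⟩; exact ⟨h2, h1⟩
          · rintro ⟨h1, h2⟩; exact ⟨h2, h1, h2.trans hx.2⟩
        simp_rw [e1]
        rw [lintegral_indicator measurableSet_Iic _,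
          Measure.restrict_restrict measurableSet_Iic, e2,
          lintegral_const_mul _ hgm]
    _ = ∫⁻ y in Ioc (0:ℝ) 1, ∫⁻ x in Ioc (0:ℝ) 1, K x y := lintegral_lintegral_swap hKm
    _ ≤ ∫⁻ y in Ioc (0:ℝ) 1,
          ENNReal.ofReal (4/(1-γ)^2) * ENNReal.ofReal (y ^ γ * (deriv v y)^2) := by
        refine setLIntegral_mono' measurableSet_Ioc fun y hy => ?_
        have e1 : ∀ x, K x y = (Ici y).indicator (fun x => c x * g y) x := fun x => by
          simp [hKdef, Set.indicator_apply, mem_Ici]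
        have e2 : Ici y ∩ Ioc (0:ℝ) 1 = Icc y 1 := by
          ext z
          simp only [mem_inter_iff, mem_Ici, mem_Ioc, mem_Icc]
          constructor
          · rintro ⟨h1, h2, h3⟩; exact ⟨h1, h3⟩
          · rintro ⟨h1, h2⟩; exact ⟨h1, hy.1.trans_le h1, h2⟩
        have hcval : ∫⁻ x in Ioc y 1, c x
            = ENNReal.ofReal ((1 - y ^ (γ - β)) / (γ - β)) * ENNReal.ofReal (1/(1-β)) := by
          have hc_eq : ∀ x : ℝ, c x = ENNReal.ofReal (x ^ (γ-1-β)) * ENNReal.ofReal (1/(1-β)) := by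
            intro x
            rw [hcdef, ← ENNReal.ofReal_mul' (by positivity)]
            congr 1
            ring
          simp_rw [hc_eq]
          rw [lintegral_mul_const _ ((by measurability : Measurable fun x : ℝ => x ^ (γ-1-β)).ennreal_ofReal),
            lint_rpow_Ioc' (by intro h; rw [hβdef] at h; linarith) hy.1 hy.2,
            show γ - 1 - β + 1 = γ - β by ring]
        have hreal : (1 - y ^ (γ - β)) / (γ - β) * (1/(1-β)) ≤ 4/(1-γ)^2 * y ^ (γ - β) := by
          have hγβd : γ - β = -d := by rw [hβdef, hddef]; ring
          have h1βd : 1 - β = d := by rw [hβdef, hddef]; ring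
          have h1γd : (1-γ)^2 = 4 * d^2 := by rw [hddef]; ring
          rw [hγβd, h1βd, h1γd]
          exact hardy_real_ineq hd (Real.rpow_nonneg hy.1.le _)
        calc ∫⁻ x in Ioc (0:ℝ) 1, K x y
            = ∫⁻ x in Icc y 1, c x * g y := by
              simp_rw [e1]
              rw [lintegral_indicator measurableSet_Ici _,
                Measure.restrict_restrict measurableSet_Ici, e2]
          _ = ∫⁻ x in Ioc y 1, c x * g y := (setLIntegral_congr Ioc_ae_eq_Icc).symm
          _ = (∫⁻ x in Ioc y 1, c x) * g y := lintegral_mul_const _ hcm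
          _ ≤ ENNReal.ofReal (4/(1-γ)^2 * y ^ (γ-β)) * g y := by
              gcongr
              have hnn : 0 ≤ (1 - y ^ (γ - β)) / (γ - β) := by
                apply div_nonneg_of_nonpos _ (by linarith)
                have := Real.one_le_rpow_of_pos_of_le_one_of_nonpos hy.1 hy.2
                  (by linarith : γ - β ≤ 0)
                linarith
              rw [hcval, ← ENNReal.ofReal_mul hnn]
              exact ENNReal.ofReal_le_ofReal hreal
          _ = ENNReal.ofReal (4/(1-γ)^2) * ENNReal.ofReal (y ^ γ * (deriv v y)^2) := by
              rw [hgdef, ← ENNReal.ofReal_mul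
                  (mul_nonneg (by positivity) (Real.rpow_nonneg hy.1.le _)),
                ← ENNReal.ofReal_mul (by positivity)]
              congr 1
              rw [mul_assoc, show y^(γ-β) * (y^β * (deriv v y)^2) = y^γ * (deriv v y)^2 by
                rw [← mul_assoc, ← Real.rpow_add hy.1, show γ - β + β = γ by ring]]
    _ = ENNReal.ofReal (4/(1-γ)^2) *
          ∫⁻ x in Ioc (0:ℝ) 1, ENNReal.ofReal (x ^ γ * (deriv v x)^2) :=
        lintegral_const_mul' _ _ ENNReal.ofReal_ne_top
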